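/- Let ν ∈ ℝ³ with |ν| = 1 and ν_i ≠ 0 for i = 1, 2, 3, and let M be an admissible boundary matrix for A_ν. Then M₁ and M₃ are invertible, the 3×3 matrices (A'_ν)ᵀ M₁⁻¹ M₂ and A'_ν M₃⁻¹ (M₂)ᵀ are skew-symmetric, and M₃ = (A'_ν)ᵀ M₁⁻¹ A'_ν + (M₂)ᵀ M₁⁻¹ M₂ and M₁ = A'_ν M₃⁻¹ (A'_ν)ᵀ + M₂ M₃⁻¹ (M₂)ᵀ. -/

import Mathlib

open Matrix

/-- Index type for `9 = 3 + 3 + 3` block vectors/matrices. -/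
abbrev I9 := Fin 3 ⊕ (Fin 3 ⊕ Fin 3)

noncomputable def alph (lam mu : ℝ) : ℝ :=
  (2 * Real.sqrt (2 * mu) + Real.sqrt (2 * mu + 3 * lam)) / 3

noncomputable def bet (lam mu : ℝ) : ℝ :=
  (- Real.sqrt (2 * mu) + Real.sqrt (2 * mu + 3 * lam)) / 3

/-- The matrix `A'_ν`. -/
noncomputable def Ap (lam mu : ℝ) (ν : Fin 3 → ℝ) : Matrix (Fin 3) (Fin 3) ℝ :=
  - !![ν 0 * alph lam mu, ν 0 * bet lam mu, ν 0 * bet lam mu;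
       ν 1 * bet lam mu, ν 1 * alph lam mu, ν 1 * bet lam mu;
       ν 2 * bet lam mu, ν 2 * bet lam mu, ν 2 * alph lam mu]

/-- The matrix `A''_ν`. -/
noncomputable def App (mu : ℝ) (ν : Fin 3 → ℝ) : Matrix (Fin 3) (Fin 3) ℝ :=
  (- Real.sqrt mu) • !![ν 1, ν 2, 0; ν 0, 0, ν 2; 0, ν 0, ν 1]

/-- The symmetric `9 × 9` matrix `A_ν` in `3 × 3` block form. -/
noncomputable def Anu (lam mu : ℝ) (ν : Fin 3 → ℝ) : Matrix I9 I9 ℝ :=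
  Matrix.fromBlocks 0 (Matrix.fromCols (Ap lam mu ν) (App mu ν))
    (Matrix.fromRows (Ap lam mu ν)ᵀ (App mu ν)ᵀ) 0

/-- The block `M₁ = M[1..3,1..3]` of a `9 × 9` matrix. -/
def blk₁ (M : Matrix I9 I9 ℝ) : Matrix (Fin 3) (Fin 3) ℝ := M.submatrix Sum.inl Sum.inl

/-- The block `M₂ = M[1..3,4..6]`. -/
def blk₂ (M : Matrix I9 I9 ℝ) : Matrix (Fin 3) (Fin 3) ℝ :=
  M.submatrix Sum.inl (Sum.inr ∘ Sum.inl)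

/-- The block `M₂' = M[1..3,7..9]`. -/
def blk₂' (M : Matrix I9 I9 ℝ) : Matrix (Fin 3) (Fin 3) ℝ :=
  M.submatrix Sum.inl (Sum.inr ∘ Sum.inr)

/-- The block `M₃ = M[4..6,4..6]`. -/
def blk₃ (M : Matrix I9 I9 ℝ) : Matrix (Fin 3) (Fin 3) ℝ :=
  M.submatrix (Sum.inr ∘ Sum.inl) (Sum.inr ∘ Sum.inl)

/-- The block `M₃' = M[4..6,7..9]`. -/
def blk₃' (M : Matrix I9 I9 ℝ) : Matrix (Fin 3) (Fin 3) ℝ :=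
  M.submatrix (Sum.inr ∘ Sum.inl) (Sum.inr ∘ Sum.inr)

/-- The block `M₃'' = M[7..9,7..9]`. -/
def blk₃'' (M : Matrix I9 I9 ℝ) : Matrix (Fin 3) (Fin 3) ℝ :=
  M.submatrix (Sum.inr ∘ Sum.inr) (Sum.inr ∘ Sum.inr)

/-- `M` is an admissible boundary matrix for `A`: `M` is symmetric positive semidefinite,
`Ker A ⊆ Ker M`, and `Ker (A - M) + Ker (A + M) = ℝ⁹`. -/
def IsAdmissible (A M : Matrix I9 I9 ℝ) : Prop :=
  M.IsSymm ∧ M.PosSemidef ∧ (∀ x : I9 → ℝ, A.mulVec x = 0 → M.mulVec x = 0) ∧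
    LinearMap.ker (A - M).mulVecLin ⊔ LinearMap.ker (A + M).mulVecLin = ⊤


lemma det_Ap (lam mu : ℝ) (ν : Fin 3 → ℝ) :
    (Ap lam mu ν).det = -(ν 0 * ν 1 * ν 2 *
      ((alph lam mu - bet lam mu)^2 * (alph lam mu + 2 * bet lam mu))) := by
  simp [Ap, Matrix.det_fin_three]
  ring

lemma isUnit_det_Ap (lam mu : ℝ) (hmu : 0 < mu) (hlm : 0 < 2 * mu + 3 * lam)
    (ν : Fin 3 → ℝ) (hν0 : ∀ i : Fin 3, ν i ≠ 0) : IsUnit (Ap lam mu ν).det := by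
  rw [isUnit_iff_ne_zero, det_Ap]
  have h1 : alph lam mu - bet lam mu = Real.sqrt (2 * mu) := by unfold alph bet; ring
  have h2 : alph lam mu + 2 * bet lam mu = Real.sqrt (2 * mu + 3 * lam) := by
    unfold alph bet; ring
  rw [h1, h2, Real.sq_sqrt (by linarith)]
  have hs : 0 < Real.sqrt (2 * mu + 3 * lam) := Real.sqrt_pos.2 hlm
  simp only [neg_ne_zero]
  exact mul_ne_zero (mul_ne_zero (mul_ne_zero (hν0 0) (hν0 1)) (hν0 2))
    (mul_ne_zero (by linarith) hs.ne')

/-! helpers -/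

lemma ext_of_mulVec {P Q : Matrix (Fin 3) (Fin 3) ℝ} (h : ∀ v, P *ᵥ v = Q *ᵥ v) : P = Q := by
  ext i j
  have := congrFun (h (Pi.single j 1)) i
  simpa [Matrix.mulVec_single] using this

lemma mulVec_zero_of_isUnit {P : Matrix (Fin 3) (Fin 3) ℝ} (hP : IsUnit P.det)
    {x : Fin 3 → ℝ} (h : P *ᵥ x = 0) : x = 0 := by
  have := congrArg (fun v => P⁻¹ *ᵥ v) h
  simpa [Matrix.mulVec_mulVec, Matrix.nonsing_inv_mul _ hP] using this

lemma dot_mulVec_symm {P : Matrix I9 I9 ℝ} (hP : Pᵀ = P) (x y : I9 → ℝ) :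
    x ⬝ᵥ (P *ᵥ y) = (P *ᵥ x) ⬝ᵥ y := by
  rw [Matrix.dotProduct_mulVec]
  nth_rewrite 1 [← hP]
  rw [Matrix.vecMul_transpose]

lemma mulVec_blk1 (M : Matrix I9 I9 ℝ) (u : I9 → ℝ) (i : Fin 3) :
    (M *ᵥ u) (Sum.inl i) = (blk₁ M *ᵥ (u ∘ Sum.inl)) i + (blk₂ M *ᵥ (u ∘ Sum.inr ∘ Sum.inl)) i
      + (blk₂' M *ᵥ (u ∘ Sum.inr ∘ Sum.inr)) i := by
  simp [Matrix.mulVec, dotProduct, Fintype.sum_sum_type, blk₁, blk₂, blk₂', Matrix.submatrix]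
  ring

lemma mulVec_blk2 (M : Matrix I9 I9 ℝ) (u : I9 → ℝ) (i : Fin 3) :
    (M *ᵥ u) (Sum.inr (Sum.inl i)) = (M.submatrix (Sum.inr ∘ Sum.inl) Sum.inl *ᵥ (u ∘ Sum.inl)) i
      + (blk₃ M *ᵥ (u ∘ Sum.inr ∘ Sum.inl)) i + (blk₃' M *ᵥ (u ∘ Sum.inr ∘ Sum.inr)) i := by
  simp [Matrix.mulVec, dotProduct, Fintype.sum_sum_type, blk₃, blk₃', Matrix.submatrix]
  ring

lemma dot_split (u v : I9 → ℝ) :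
    u ⬝ᵥ v = (u ∘ Sum.inl) ⬝ᵥ (v ∘ Sum.inl) + (u ∘ Sum.inr ∘ Sum.inl) ⬝ᵥ (v ∘ Sum.inr ∘ Sum.inl)
      + (u ∘ Sum.inr ∘ Sum.inr) ⬝ᵥ (v ∘ Sum.inr ∘ Sum.inr) := by
  simp [dotProduct, Fintype.sum_sum_type]
  ring

lemma half_add {a b : Matrix (Fin 3) (Fin 3) ℝ} (h : a + a = b + b) : a = b := by
  have h2 : (2:ℝ) • a = (2:ℝ) • b := by rw [two_smul, two_smul]; exact h
  exact smul_right_injective _ two_ne_zero h2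

lemma half_zero {a : Matrix (Fin 3) (Fin 3) ℝ} (h : a + a = 0) : a = 0 :=
  half_add (b := 0) (by simpa using h)

noncomputable def AnuG (B B'' : Matrix (Fin 3) (Fin 3) ℝ) : Matrix I9 I9 ℝ :=
  Matrix.fromBlocks 0 (Matrix.fromCols B B'') (Matrix.fromRows Bᵀ B''ᵀ) 0

lemma AnuG_mulVec (B B'' : Matrix (Fin 3) (Fin 3) ℝ) (u : I9 → ℝ) :
    AnuG B B'' *ᵥ u = Sum.elim (B *ᵥ (u ∘ Sum.inr ∘ Sum.inl) + B'' *ᵥ (u ∘ Sum.inr ∘ Sum.inr))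
      (Sum.elim (Bᵀ *ᵥ (u ∘ Sum.inl)) (B''ᵀ *ᵥ (u ∘ Sum.inl))) := by
  funext i
  rcases i with i | i | i <;>
    simp [AnuG, Matrix.mulVec, dotProduct, Fintype.sum_sum_type, Matrix.fromBlocks,
      Matrix.fromCols, Matrix.transpose, Matrix.fromRows_apply_inl,
      Matrix.fromRows_apply_inr]

lemma AnuG_symm (B B'' : Matrix (Fin 3) (Fin 3) ℝ) : (AnuG B B'')ᵀ = AnuG B B'' := by
  simp [AnuG, Matrix.fromBlocks_transpose, Matrix.transpose_fromCols,
    Matrix.transpose_fromRows]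

set_option maxHeartbeats 1000000 in
set_option synthInstance.maxHeartbeats 200000 in
theorem main_general (B B'' : Matrix (Fin 3) (Fin 3) ℝ) (hB : IsUnit B.det)
    (M : Matrix I9 I9 ℝ) (hM : IsAdmissible (AnuG B B'') M) :
    IsUnit (blk₁ M).det ∧ IsUnit (blk₃ M).det ∧
      (Bᵀ * (blk₁ M)⁻¹ * blk₂ M)ᵀ = -(Bᵀ * (blk₁ M)⁻¹ * blk₂ M) ∧
      (B * (blk₃ M)⁻¹ * (blk₂ M)ᵀ)ᵀ = -(B * (blk₃ M)⁻¹ * (blk₂ M)ᵀ) ∧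
      blk₃ M = Bᵀ * (blk₁ M)⁻¹ * B + (blk₂ M)ᵀ * (blk₁ M)⁻¹ * blk₂ M ∧
      blk₁ M = B * (blk₃ M)⁻¹ * Bᵀ + blk₂ M * (blk₃ M)⁻¹ * (blk₂ M)ᵀ := by
  obtain ⟨hsymm, hpsd, hker, hsup⟩ := hM
  have hsymm' : Mᵀ = M := hsymm
  set A := AnuG B B'' with hAdef
  have hBt : IsUnit Bᵀ.det := by rwa [Matrix.det_transpose]
  -- PSD facts
  have psd0 : ∀ u : I9 → ℝ, u ⬝ᵥ (M *ᵥ u) = 0 → M *ᵥ u = 0 := by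
    intro u h
    exact (hpsd.dotProduct_mulVec_zero_iff u).1 (by simpa using h)
  have psdnn : ∀ u : I9 → ℝ, 0 ≤ u ⬝ᵥ (M *ᵥ u) := by
    intro u
    simpa using hpsd.dotProduct_mulVec_nonneg u
  -- kernel of A
  have kerA_iff : ∀ u : I9 → ℝ, A *ᵥ u = 0 ↔
      (u ∘ Sum.inl = 0 ∧ B *ᵥ (u ∘ Sum.inr ∘ Sum.inl) + B'' *ᵥ (u ∘ Sum.inr ∘ Sum.inr) = 0) := by
    intro u
    rw [AnuG_mulVec]
    constructor
    · intro h
      have hx : Bᵀ *ᵥ (u ∘ Sum.inl) = 0 := by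
        funext i
        exact congrFun h (Sum.inr (Sum.inl i))
      refine ⟨mulVec_zero_of_isUnit hBt hx, ?_⟩
      funext i
      exact congrFun h (Sum.inl i)
    · rintro ⟨hx, hyz⟩
      funext i
      rcases i with i | i | i
      · exact congrFun hyz i
      · simp [hx]
      · simp [hx]
  -- quadratic form vanishes when first component vanishes
  have qA : ∀ u : I9 → ℝ, u ∘ Sum.inl = 0 → u ⬝ᵥ (A *ᵥ u) = 0 := by
    intro u hx
    rw [AnuG_mulVec, dot_split]
    simp [hx, ← Function.comp_assoc]
  -- key: elements of V± with vanishing first block are in Ker A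
  have key0 : ∀ u : I9 → ℝ, (A *ᵥ u = M *ᵥ u ∨ A *ᵥ u = -(M *ᵥ u)) → u ∘ Sum.inl = 0 →
      M *ᵥ u = 0 ∧ A *ᵥ u = 0 := by
    intro u hu hx
    have hq : u ⬝ᵥ (M *ᵥ u) = 0 := by
      rcases hu with h | h
      · rw [← h]; exact qA u hx
      · have := qA u hx
        rw [h] at this
        simpa using this
    have hMu := psd0 u hq
    refine ⟨hMu, ?_⟩
    rcases hu with h | h <;> simp [h, hMu]
  -- Ker M ⊆ Ker A
  have hMA : ∀ u : I9 → ℝ, M *ᵥ u = 0 → A *ᵥ u = 0 := by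
    intro u hMu
    have hu : u ∈ LinearMap.ker (A - M).mulVecLin ⊔ LinearMap.ker (A + M).mulVecLin := by
      rw [hsup]; trivial
    obtain ⟨p, hp, q, hq, rfl⟩ := Submodule.mem_sup.1 hu
    rw [LinearMap.mem_ker, Matrix.mulVecLin_apply, Matrix.sub_mulVec, sub_eq_zero] at hp
    rw [LinearMap.mem_ker, Matrix.mulVecLin_apply, Matrix.add_mulVec] at hq
    have hq' : A *ᵥ q = -(M *ᵥ q) := by linear_combination (norm := module) hq
    have cross : p ⬝ᵥ (M *ᵥ q) = 0 := by
      have e1 : p ⬝ᵥ (M *ᵥ q) = (M *ᵥ p) ⬝ᵥ q := dot_mulVec_symm hsymm' p q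
      have e2 : p ⬝ᵥ (A *ᵥ q) = (A *ᵥ p) ⬝ᵥ q := dot_mulVec_symm (AnuG_symm B B'') p q
      rw [hq'] at e2
      rw [hp] at e2
      rw [← e1] at e2
      simp only [dotProduct_neg] at e2
      linarith
    have cross' : q ⬝ᵥ (M *ᵥ p) = 0 := by
      rw [dot_mulVec_symm hsymm' q p, dotProduct_comm]
      exact cross
    have h0 : (p + q) ⬝ᵥ (M *ᵥ (p + q)) = 0 := by rw [hMu]; simp
    rw [Matrix.mulVec_add, dotProduct_add, add_dotProduct, add_dotProduct] at h0
    have hpp : p ⬝ᵥ (M *ᵥ p) = 0 := by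
      have h1 := psdnn p
      have h2 := psdnn q
      have c2 : p ⬝ᵥ (M *ᵥ q) + q ⬝ᵥ (M *ᵥ q) = q ⬝ᵥ (M *ᵥ q) := by rw [cross]; ring
      nlinarith [h0]
    have hqq : q ⬝ᵥ (M *ᵥ q) = 0 := by
      have h1 := psdnn p
      nlinarith [h0]
    have hMp := psd0 p hpp
    have hMq := psd0 q hqq
    rw [Matrix.mulVec_add, hp, hq', hMp, hMq]
    simp
  -- invertibility of blk₁
  have hM1 : IsUnit (blk₁ M).det := by
    rw [isUnit_iff_ne_zero]
    intro hdet
    obtain ⟨x, hx0, hxM⟩ := Matrix.exists_mulVec_eq_zero_iff.2 hdet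
    set u : I9 → ℝ := Sum.elim x 0 with hudef
    have hu1 : u ∘ Sum.inl = x := rfl
    have hu2 : u ∘ Sum.inr ∘ Sum.inl = 0 := rfl
    have hu3 : u ∘ Sum.inr ∘ Sum.inr = 0 := rfl
    have hq : u ⬝ᵥ (M *ᵥ u) = 0 := by
      rw [dot_split]
      have e1 : ((M *ᵥ u) ∘ Sum.inl) = blk₁ M *ᵥ x := by
        funext i
        rw [Function.comp_apply, mulVec_blk1, hu1, hu2, hu3]
        simp
      rw [e1, hxM, hu2, hu3]
      simp
    have hMu := psd0 u hq
    have hAu := hMA u hMu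
    have := (kerA_iff u).1 hAu
    rw [hu1] at this
    exact hx0 this.1
  -- invertibility of blk₃
  have hM3 : IsUnit (blk₃ M).det := by
    rw [isUnit_iff_ne_zero]
    intro hdet
    obtain ⟨y, hy0, hyM⟩ := Matrix.exists_mulVec_eq_zero_iff.2 hdet
    set u : I9 → ℝ := Sum.elim 0 (Sum.elim y 0) with hudef
    have hu1 : u ∘ Sum.inl = 0 := rfl
    have hu2 : u ∘ Sum.inr ∘ Sum.inl = y := rfl
    have hu3 : u ∘ Sum.inr ∘ Sum.inr = 0 := rfl
    have hq : u ⬝ᵥ (M *ᵥ u) = 0 := by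
      rw [dot_split]
      have e2 : ((M *ᵥ u) ∘ Sum.inr ∘ Sum.inl) = blk₃ M *ᵥ y := by
        funext i
        rw [Function.comp_apply, Function.comp_apply, mulVec_blk2, hu1, hu2, hu3]
        simp
      rw [e2, hyM, hu1, hu3]
      simp
    have hMu := psd0 u hq
    have hAu := hMA u hMu
    have := ((kerA_iff u).1 hAu).2
    rw [hu2, hu3] at this
    simp only [Matrix.mulVec_zero, add_zero] at this
    exact hy0 (mulVec_zero_of_isUnit hB this)
  -- the kernel of A as a range
  set C : Matrix (Fin 3) (Fin 3) ℝ := B⁻¹ * B'' with hCdef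
  have hBC : B * C = B'' := Matrix.mul_nonsing_inv_cancel_left B B'' hB
  set gfun : (Fin 3 → ℝ) → (I9 → ℝ) := fun z => Sum.elim 0 (Sum.elim (-(C *ᵥ z)) z) with hgfun
  have hgadd : ∀ z z', gfun (z + z') = gfun z + gfun z' := by
    intro z z'
    funext i
    rcases i with i | i | i <;> simp [hgfun, Matrix.mulVec_add] <;> ring
  have hgsmul : ∀ (c : ℝ) z, gfun (c • z) = c • gfun z := by
    intro c z
    funext i
    rcases i with i | i | i <;> simp [hgfun, Matrix.mulVec_smul]
  set g : (Fin 3 → ℝ) →ₗ[ℝ] (I9 → ℝ) :=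
    { toFun := gfun, map_add' := hgadd, map_smul' := hgsmul } with hgdef
  have hgker : ∀ z, A *ᵥ gfun z = 0 := by
    intro z
    rw [kerA_iff]
    constructor
    · rfl
    · have h1 : (gfun z ∘ Sum.inr ∘ Sum.inl) = -(C *ᵥ z) := rfl
      have h2 : (gfun z ∘ Sum.inr ∘ Sum.inr) = z := rfl
      rw [h1, h2, Matrix.mulVec_neg, Matrix.mulVec_mulVec, hBC]
      simp
  have hKrange : LinearMap.ker A.mulVecLin = LinearMap.range g := by
    ext u
    rw [LinearMap.mem_ker, Matrix.mulVecLin_apply, LinearMap.mem_range]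
    constructor
    · intro hAu
      obtain ⟨hx, hyz⟩ := (kerA_iff u).1 hAu
      refine ⟨u ∘ Sum.inr ∘ Sum.inr, ?_⟩
      have hy : u ∘ Sum.inr ∘ Sum.inl = -(C *ᵥ (u ∘ Sum.inr ∘ Sum.inr)) := by
        have : B *ᵥ ((u ∘ Sum.inr ∘ Sum.inl) + C *ᵥ (u ∘ Sum.inr ∘ Sum.inr)) = 0 := by
          rw [Matrix.mulVec_add, Matrix.mulVec_mulVec, hBC]
          exact hyz
        have h0 := mulVec_zero_of_isUnit hB this
        funext i
        have := congrFun h0 i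
        simp only [Pi.add_apply, Pi.zero_apply] at this
        simp only [Pi.neg_apply]
        linarith
      funext i
      rcases i with i | i | i
      · exact (congrFun hx i).symm
      · exact (congrFun hy i).symm
      · rfl
    · rintro ⟨z, rfl⟩
      exact hgker z
  have hginj : Function.Injective g := by
    intro z z' h
    funext i
    exact congrFun (congrArg (fun v => v ∘ Sum.inr ∘ Sum.inr) h) i
  have hKdim : Module.finrank ℝ (LinearMap.ker A.mulVecLin) = 3 := by
    rw [hKrange, LinearMap.finrank_range_of_inj hginj, Module.finrank_pi]
    simp
  -- subspaces
  set K := LinearMap.ker A.mulVecLin with hKdef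
  set Vp := LinearMap.ker (A - M).mulVecLin with hVpdef
  set Vm := LinearMap.ker (A + M).mulVecLin with hVmdef
  have hmemVp : ∀ u, u ∈ Vp ↔ A *ᵥ u = M *ᵥ u := by
    intro u
    rw [hVpdef, LinearMap.mem_ker, Matrix.mulVecLin_apply, Matrix.sub_mulVec, sub_eq_zero]
  have hmemVm : ∀ u, u ∈ Vm ↔ A *ᵥ u = -(M *ᵥ u) := by
    intro u
    rw [hVmdef, LinearMap.mem_ker, Matrix.mulVecLin_apply, Matrix.add_mulVec]
    constructor
    · intro h; linear_combination (norm := module) h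
    · intro h; linear_combination (norm := module) h
  have hmemK : ∀ u, u ∈ K ↔ A *ᵥ u = 0 := by
    intro u
    rw [hKdef, LinearMap.mem_ker, Matrix.mulVecLin_apply]
  have hKVp : K ≤ Vp := by
    intro u hu
    rw [hmemK] at hu
    rw [hmemVp, hu, hker u hu]
  have hKVm : K ≤ Vm := by
    intro u hu
    rw [hmemK] at hu
    rw [hmemVm, hu, hker u hu]
    simp
  have hinf : Vp ⊓ Vm = K := by
    ext u
    rw [Submodule.mem_inf, hmemVp, hmemVm, hmemK]
    constructor
    · rintro ⟨h1, h2⟩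
      have hMu : M *ᵥ u = 0 := by
        have := h1.symm.trans h2
        linear_combination (norm := module) ((2:ℝ)⁻¹ : ℝ) • this
      rw [h1, hMu]
    · intro h
      have hMu := hker u h
      rw [h, hMu]
      simp
  -- projections
  set fp := (LinearMap.funLeft ℝ ℝ (Sum.inl : Fin 3 → I9)).comp Vp.subtype with hfpdef
  set fm := (LinearMap.funLeft ℝ ℝ (Sum.inl : Fin 3 → I9)).comp Vm.subtype with hfmdef
  have hfp_apply : ∀ u : Vp, fp u = (u : I9 → ℝ) ∘ Sum.inl := fun u => rfl
  have hfm_apply : ∀ u : Vm, fm u = (u : I9 → ℝ) ∘ Sum.inl := fun u => rfl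
  have hkerfp : LinearMap.ker fp = K.comap Vp.subtype := by
    ext u
    rw [LinearMap.mem_ker, Submodule.mem_comap, hfp_apply, Submodule.coe_subtype, hmemK]
    constructor
    · intro h
      exact (key0 u (Or.inl ((hmemVp u).1 u.2)) h).2
    · intro h
      exact ((kerA_iff u).1 h).1
  have hkerfm : LinearMap.ker fm = K.comap Vm.subtype := by
    ext u
    rw [LinearMap.mem_ker, Submodule.mem_comap, hfm_apply, Submodule.coe_subtype, hmemK]
    constructor
    · intro h
      exact (key0 u (Or.inr ((hmemVm u).1 u.2)) h).2
    · intro h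
      exact ((kerA_iff u).1 h).1
  have dimkerfp : Module.finrank ℝ (LinearMap.ker fp) = 3 := by
    rw [hkerfp]
    rw [(Submodule.comapSubtypeEquivOfLe hKVp).finrank_eq]
    exact hKdim
  have dimkerfm : Module.finrank ℝ (LinearMap.ker fm) = 3 := by
    rw [hkerfm]
    rw [(Submodule.comapSubtypeEquivOfLe hKVm).finrank_eq]
    exact hKdim
  have rnp := LinearMap.finrank_range_add_finrank_ker fp
  have rnm := LinearMap.finrank_range_add_finrank_ker fm
  have hsumdim : Module.finrank ℝ Vp + Module.finrank ℝ Vm = 12 := by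
    have h1 := Submodule.finrank_sup_add_finrank_inf_eq Vp Vm
    rw [hsup, hinf, hKdim, finrank_top] at h1
    rw [← h1, Module.finrank_pi]
    simp [I9]
  have hlep : Module.finrank ℝ (LinearMap.range fp) ≤ 3 := by
    have := Submodule.finrank_le (LinearMap.range fp)
    rwa [Module.finrank_pi, Fintype.card_fin] at this
  have hlem : Module.finrank ℝ (LinearMap.range fm) ≤ 3 := by
    have := Submodule.finrank_le (LinearMap.range fm)
    rwa [Module.finrank_pi, Fintype.card_fin] at this
  have hrangep : LinearMap.range fp = ⊤ := by
    apply Submodule.eq_top_of_finrank_eq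
    rw [Module.finrank_pi, Fintype.card_fin]
    omega
  have hrangem : LinearMap.range fm = ⊤ := by
    apply Submodule.eq_top_of_finrank_eq
    rw [Module.finrank_pi, Fintype.card_fin]
    omega
  have surjp : ∀ x : Fin 3 → ℝ, ∃ u : I9 → ℝ, A *ᵥ u = M *ᵥ u ∧ u ∘ Sum.inl = x := by
    intro x
    have : x ∈ LinearMap.range fp := by rw [hrangep]; trivial
    obtain ⟨u, hu⟩ := this
    exact ⟨u, (hmemVp u).1 u.2, hu⟩
  have surjm : ∀ x : Fin 3 → ℝ, ∃ u : I9 → ℝ, A *ᵥ u = -(M *ᵥ u) ∧ u ∘ Sum.inl = x := by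
    intro x
    have : x ∈ LinearMap.range fm := by rw [hrangem]; trivial
    obtain ⟨u, hu⟩ := this
    exact ⟨u, (hmemVm u).1 u.2, hu⟩
  -- symmetry of blocks
  have hsub21 : M.submatrix (Sum.inr ∘ Sum.inl) Sum.inl = (blk₂ M)ᵀ := by
    ext i j
    have := congrFun (congrFun hsymm' (Sum.inr (Sum.inl i))) (Sum.inl j)
    simpa [blk₂, Matrix.transpose_apply] using this.symm
  have hM1s : (blk₁ M)ᵀ = blk₁ M := by
    ext i j
    have := congrFun (congrFun hsymm' (Sum.inl i)) (Sum.inl j)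
    simpa [blk₁, Matrix.transpose_apply] using this
  have hM3s : (blk₃ M)ᵀ = blk₃ M := by
    ext i j
    have := congrFun (congrFun hsymm' (Sum.inr (Sum.inl i))) (Sum.inr (Sum.inl j))
    simpa [blk₃, Matrix.transpose_apply] using this
  have hM1is : ((blk₁ M)⁻¹)ᵀ = (blk₁ M)⁻¹ := by
    rw [Matrix.transpose_nonsing_inv, hM1s]
  have hM3is : ((blk₃ M)⁻¹)ᵀ = (blk₃ M)⁻¹ := by
    rw [Matrix.transpose_nonsing_inv, hM3s]
  -- kernel relations
  have hMg : ∀ z, M *ᵥ gfun z = 0 := fun z => hker _ (hgker z)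
  have hg1 : ∀ z, gfun z ∘ Sum.inl = 0 := fun z => rfl
  have hg2 : ∀ z, gfun z ∘ Sum.inr ∘ Sum.inl = -(C *ᵥ z) := fun z => rfl
  have hg3 : ∀ z, gfun z ∘ Sum.inr ∘ Sum.inr = z := fun z => rfl
  have hM2' : blk₂' M = blk₂ M * C := by
    apply ext_of_mulVec
    intro z
    funext i
    have h := congrFun (hMg z) (Sum.inl i)
    rw [mulVec_blk1, hg1, hg2, hg3] at h
    simp only [Matrix.mulVec_zero, Pi.zero_apply, Matrix.mulVec_neg, Pi.neg_apply,
      ← Matrix.mulVec_mulVec] at h ⊢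
    linarith
  have hM3' : blk₃' M = blk₃ M * C := by
    apply ext_of_mulVec
    intro z
    funext i
    have h := congrFun (hMg z) (Sum.inr (Sum.inl i))
    rw [mulVec_blk2, hg1, hg2, hg3] at h
    simp only [Matrix.mulVec_zero, Pi.zero_apply, Matrix.mulVec_neg, Pi.neg_apply,
      ← Matrix.mulVec_mulVec] at h ⊢
    linarith
  -- key identities from surjectivity
  have keyp : ∀ x : Fin 3 → ℝ, ∃ w : Fin 3 → ℝ,
      (B - blk₂ M) *ᵥ w = blk₁ M *ᵥ x ∧ blk₃ M *ᵥ w = (Bᵀ - (blk₂ M)ᵀ) *ᵥ x := by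
    intro x
    obtain ⟨u, hu, hux⟩ := surjp x
    set y := u ∘ Sum.inr ∘ Sum.inl with hy
    set z := u ∘ Sum.inr ∘ Sum.inr with hz
    refine ⟨y + C *ᵥ z, ?_, ?_⟩
    · funext i
      have h := congrFun hu (Sum.inl i)
      rw [AnuG_mulVec] at h
      rw [mulVec_blk1, hux, hM2'] at h
      simp only [Sum.elim_inl, Pi.add_apply, ← Matrix.mulVec_mulVec, ← hy, ← hz] at h
      have hb : B *ᵥ (y + C *ᵥ z) = B *ᵥ y + B'' *ᵥ z := by
        rw [Matrix.mulVec_add, Matrix.mulVec_mulVec, hBC]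
      simp only [Matrix.sub_mulVec, Pi.sub_apply, hb, Pi.add_apply, Matrix.mulVec_add,
        ← Matrix.mulVec_mulVec]
      have hbcz : (B *ᵥ (C *ᵥ z)) i = (B'' *ᵥ z) i := by rw [Matrix.mulVec_mulVec, hBC]
      linarith
    · funext i
      have h := congrFun hu (Sum.inr (Sum.inl i))
      rw [AnuG_mulVec] at h
      rw [mulVec_blk2, hux, hsub21, hM3'] at h
      simp only [Sum.elim_inr, Sum.elim_inl, ← Matrix.mulVec_mulVec, ← hy, ← hz] at h
      simp only [Matrix.mulVec_add, Pi.add_apply, Matrix.sub_mulVec, Pi.sub_apply]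
      linarith
  have keym : ∀ x : Fin 3 → ℝ, ∃ w : Fin 3 → ℝ,
      (B + blk₂ M) *ᵥ w = -(blk₁ M *ᵥ x) ∧ blk₃ M *ᵥ w = -((Bᵀ + (blk₂ M)ᵀ) *ᵥ x) := by
    intro x
    obtain ⟨u, hu, hux⟩ := surjm x
    set y := u ∘ Sum.inr ∘ Sum.inl with hy
    set z := u ∘ Sum.inr ∘ Sum.inr with hz
    refine ⟨y + C *ᵥ z, ?_, ?_⟩
    · funext i
      have h := congrFun hu (Sum.inl i)
      rw [AnuG_mulVec] at h
      simp only [Pi.neg_apply] at h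
      rw [mulVec_blk1, hux, hM2'] at h
      simp only [Sum.elim_inl, Pi.add_apply, ← Matrix.mulVec_mulVec, ← hy, ← hz] at h
      have hb : B *ᵥ (y + C *ᵥ z) = B *ᵥ y + B'' *ᵥ z := by
        rw [Matrix.mulVec_add, Matrix.mulVec_mulVec, hBC]
      simp only [Matrix.add_mulVec, Pi.add_apply, hb, Pi.neg_apply, Matrix.mulVec_add,
        ← Matrix.mulVec_mulVec]
      have hbcz : (B *ᵥ (C *ᵥ z)) i = (B'' *ᵥ z) i := by rw [Matrix.mulVec_mulVec, hBC]
      linarith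
    · funext i
      have h := congrFun hu (Sum.inr (Sum.inl i))
      rw [AnuG_mulVec] at h
      simp only [Pi.neg_apply] at h
      rw [mulVec_blk2, hux, hsub21, hM3'] at h
      simp only [Sum.elim_inr, Sum.elim_inl, ← Matrix.mulVec_mulVec, ← hy, ← hz] at h
      simp only [Matrix.mulVec_add, Pi.add_apply, Matrix.add_mulVec, Pi.neg_apply]
      linarith
  -- F identities
  have Fp : (B - blk₂ M) * ((blk₃ M)⁻¹ * (Bᵀ - (blk₂ M)ᵀ)) = blk₁ M := by
    apply ext_of_mulVec
    intro x
    obtain ⟨w, e1, e2⟩ := keyp x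
    have hw : (blk₃ M)⁻¹ *ᵥ ((Bᵀ - (blk₂ M)ᵀ) *ᵥ x) = w := by
      rw [← e2, Matrix.mulVec_mulVec, Matrix.nonsing_inv_mul _ hM3, Matrix.one_mulVec]
    rw [← Matrix.mulVec_mulVec, ← Matrix.mulVec_mulVec, hw, e1]
  have Fm : (B + blk₂ M) * ((blk₃ M)⁻¹ * (Bᵀ + (blk₂ M)ᵀ)) = blk₁ M := by
    apply ext_of_mulVec
    intro x
    obtain ⟨w, e1, e2⟩ := keym x
    have hw : (blk₃ M)⁻¹ *ᵥ ((Bᵀ + (blk₂ M)ᵀ) *ᵥ x) = -w := by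
      have hneg : blk₃ M *ᵥ (-w) = (Bᵀ + (blk₂ M)ᵀ) *ᵥ x := by
        rw [Matrix.mulVec_neg, e2, neg_neg]
      rw [← hneg, Matrix.mulVec_mulVec, Matrix.nonsing_inv_mul _ hM3, Matrix.one_mulVec]
    rw [← Matrix.mulVec_mulVec, ← Matrix.mulVec_mulVec, hw, Matrix.mulVec_neg, e1, neg_neg]
  have hdetp : IsUnit (B - blk₂ M).det := by
    have h := congrArg Matrix.det Fp
    rw [Matrix.det_mul] at h
    rw [← h] at hM1
    exact isUnit_of_mul_isUnit_left hM1
  have hdetm : IsUnit (B + blk₂ M).det := by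
    have h := congrArg Matrix.det Fm
    rw [Matrix.det_mul] at h
    rw [← h] at hM1
    exact isUnit_of_mul_isUnit_left hM1
  -- G identities
  have Hp : blk₃ M * ((B - blk₂ M)⁻¹ * blk₁ M) = Bᵀ - (blk₂ M)ᵀ := by
    apply ext_of_mulVec
    intro x
    obtain ⟨w, e1, e2⟩ := keyp x
    have hw : (B - blk₂ M)⁻¹ *ᵥ (blk₁ M *ᵥ x) = w := by
      rw [← e1, Matrix.mulVec_mulVec, Matrix.nonsing_inv_mul _ hdetp, Matrix.one_mulVec]
    rw [← Matrix.mulVec_mulVec, ← Matrix.mulVec_mulVec, hw, e2]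
  have Hm : blk₃ M * ((B + blk₂ M)⁻¹ * blk₁ M) = Bᵀ + (blk₂ M)ᵀ := by
    apply ext_of_mulVec
    intro x
    obtain ⟨w, e1, e2⟩ := keym x
    have hw : (B + blk₂ M)⁻¹ *ᵥ (blk₁ M *ᵥ x) = -w := by
      have hneg : (B + blk₂ M) *ᵥ (-w) = blk₁ M *ᵥ x := by
        rw [Matrix.mulVec_neg, e1, neg_neg]
      rw [← hneg, Matrix.mulVec_mulVec, Matrix.nonsing_inv_mul _ hdetm, Matrix.one_mulVec]
    rw [← Matrix.mulVec_mulVec, ← Matrix.mulVec_mulVec, hw, Matrix.mulVec_neg, e2, neg_neg]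
  have Gp : blk₃ M = (Bᵀ - (blk₂ M)ᵀ) * ((blk₁ M)⁻¹ * (B - blk₂ M)) := by
    have hone : ((B - blk₂ M)⁻¹ * blk₁ M) * ((blk₁ M)⁻¹ * (B - blk₂ M)) = 1 := by
      rw [Matrix.mul_assoc, Matrix.mul_nonsing_inv_cancel_left _ _ hM1,
        Matrix.nonsing_inv_mul _ hdetp]
    calc blk₃ M = blk₃ M * (((B - blk₂ M)⁻¹ * blk₁ M) * ((blk₁ M)⁻¹ * (B - blk₂ M))) := by
          rw [hone, mul_one]
      _ = (blk₃ M * ((B - blk₂ M)⁻¹ * blk₁ M)) * ((blk₁ M)⁻¹ * (B - blk₂ M)) := by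
          exact (Matrix.mul_assoc _ _ _).symm
      _ = (Bᵀ - (blk₂ M)ᵀ) * ((blk₁ M)⁻¹ * (B - blk₂ M)) := by rw [Hp]
  have Gm : blk₃ M = (Bᵀ + (blk₂ M)ᵀ) * ((blk₁ M)⁻¹ * (B + blk₂ M)) := by
    have hone : ((B + blk₂ M)⁻¹ * blk₁ M) * ((blk₁ M)⁻¹ * (B + blk₂ M)) = 1 := by
      rw [Matrix.mul_assoc, Matrix.mul_nonsing_inv_cancel_left _ _ hM1,
        Matrix.nonsing_inv_mul _ hdetm]
    calc blk₃ M = blk₃ M * (((B + blk₂ M)⁻¹ * blk₁ M) * ((blk₁ M)⁻¹ * (B + blk₂ M))) := by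
          rw [hone, mul_one]
      _ = (blk₃ M * ((B + blk₂ M)⁻¹ * blk₁ M)) * ((blk₁ M)⁻¹ * (B + blk₂ M)) := by
          exact (Matrix.mul_assoc _ _ _).symm
      _ = (Bᵀ + (blk₂ M)ᵀ) * ((blk₁ M)⁻¹ * (B + blk₂ M)) := by rw [Hm]
  refine ⟨hM1, hM3, ?_, ?_, ?_, ?_⟩
  · have hrel : Bᵀ * ((blk₁ M)⁻¹ * blk₂ M) + (blk₂ M)ᵀ * ((blk₁ M)⁻¹ * B) = 0 := by
      apply half_zero
      calc (Bᵀ * ((blk₁ M)⁻¹ * blk₂ M) + (blk₂ M)ᵀ * ((blk₁ M)⁻¹ * B))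
            + (Bᵀ * ((blk₁ M)⁻¹ * blk₂ M) + (blk₂ M)ᵀ * ((blk₁ M)⁻¹ * B))
          = (Bᵀ + (blk₂ M)ᵀ) * ((blk₁ M)⁻¹ * (B + blk₂ M))
            - (Bᵀ - (blk₂ M)ᵀ) * ((blk₁ M)⁻¹ * (B - blk₂ M)) := by noncomm_ring
        _ = blk₃ M - blk₃ M := by rw [← Gp, ← Gm]
        _ = 0 := sub_self _
    rw [Matrix.transpose_mul, Matrix.transpose_mul, Matrix.transpose_transpose, hM1is]
    simp only [Matrix.mul_assoc] at hrel ⊢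
    exact eq_neg_of_add_eq_zero_left (by rw [add_comm]; exact hrel)
  · have hrel : B * ((blk₃ M)⁻¹ * (blk₂ M)ᵀ) + blk₂ M * ((blk₃ M)⁻¹ * Bᵀ) = 0 := by
      apply half_zero
      calc (B * ((blk₃ M)⁻¹ * (blk₂ M)ᵀ) + blk₂ M * ((blk₃ M)⁻¹ * Bᵀ))
            + (B * ((blk₃ M)⁻¹ * (blk₂ M)ᵀ) + blk₂ M * ((blk₃ M)⁻¹ * Bᵀ))
          = (B + blk₂ M) * ((blk₃ M)⁻¹ * (Bᵀ + (blk₂ M)ᵀ))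
            - (B - blk₂ M) * ((blk₃ M)⁻¹ * (Bᵀ - (blk₂ M)ᵀ)) := by noncomm_ring
        _ = blk₁ M - blk₁ M := by rw [Fp, Fm]
        _ = 0 := sub_self _
    rw [Matrix.transpose_mul, Matrix.transpose_mul, Matrix.transpose_transpose, hM3is]
    simp only [Matrix.mul_assoc] at hrel ⊢
    exact eq_neg_of_add_eq_zero_left (by rw [add_comm]; exact hrel)
  · apply half_add
    nth_rewrite 1 [Gp]
    nth_rewrite 1 [Gm]
    noncomm_ring
  · apply half_add
    nth_rewrite 1 [← Fp]
    nth_rewrite 1 [← Fm]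
    noncomm_ring

theorem stmt8 (lam mu : ℝ) (hmu : 0 < mu) (hlm : 0 < 2 * mu + 3 * lam) (ν : Fin 3 → ℝ)
    (hν : ν 0 ^ 2 + ν 1 ^ 2 + ν 2 ^ 2 = 1)
    (hν0 : ∀ i : Fin 3, ν i ≠ 0)
    (M : Matrix I9 I9 ℝ) (hM : IsAdmissible (Anu lam mu ν) M) :
    IsUnit (blk₁ M).det ∧ IsUnit (blk₃ M).det ∧
      ((Ap lam mu ν)ᵀ * (blk₁ M)⁻¹ * blk₂ M)ᵀ = -((Ap lam mu ν)ᵀ * (blk₁ M)⁻¹ * blk₂ M) ∧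
      (Ap lam mu ν * (blk₃ M)⁻¹ * (blk₂ M)ᵀ)ᵀ = -(Ap lam mu ν * (blk₃ M)⁻¹ * (blk₂ M)ᵀ) ∧
      blk₃ M = (Ap lam mu ν)ᵀ * (blk₁ M)⁻¹ * Ap lam mu ν + (blk₂ M)ᵀ * (blk₁ M)⁻¹ * blk₂ M ∧
      blk₁ M = Ap lam mu ν * (blk₃ M)⁻¹ * (Ap lam mu ν)ᵀ + blk₂ M * (blk₃ M)⁻¹ * (blk₂ M)ᵀ := by
  exact main_general (Ap lam mu ν) (App mu ν) (isUnit_det_Ap lam mu hmu hlm ν hν0) M hM
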